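/- Let A ∈ ℍ^{m×m} be a quaternion matrix with singular values σ₁(A) ≥ … ≥ σ_m(A), and let H = (A* + A)/2 with eigenvalues λ₁(H) ≥ … ≥ λ_m(H). Then λᵢ(H) ≤ σᵢ(A) for all i = 1, …, m. -/

import Mathlib

open Quaternion Matrix

namespace QSVDHelper

variable {m : ℕ}

lemma sum_smul_row (c : Fin m → ℍ[ℝ]) (M : Matrix (Fin m) (Fin m) ℍ[ℝ]) :
    ∑ k, c k • M k = c ᵥ* M := by
  funext j
  simp [Matrix.vecMul, dotProduct, Finset.sum_apply]

lemma rows_li {M N : Matrix (Fin m) (Fin m) ℍ[ℝ]} (h : M * N = 1) :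
    LinearIndependent ℍ[ℝ] (fun k => M k) := by
  rw [Fintype.linearIndependent_iff]
  intro c hc k
  have h1 : c ᵥ* M = 0 := by rw [← sum_smul_row]; exact hc
  have h2 : (c ᵥ* M) ᵥ* N = (0 : Fin m → ℍ[ℝ]) ᵥ* N := by rw [h1]
  rw [Matrix.vecMul_vecMul, h, Matrix.vecMul_one, Matrix.zero_vecMul] at h2
  exact congrFun h2 k

lemma exists_coeffs {p : Fin m → Prop} [DecidablePred p] {M : Matrix (Fin m) (Fin m) ℍ[ℝ]}
    {x : Fin m → ℍ[ℝ]}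
    (hx : x ∈ Submodule.span ℍ[ℝ] (Set.range (fun k : {k // p k} => M k.1))) :
    ∃ a : Fin m → ℍ[ℝ], (∀ k, ¬ p k → a k = 0) ∧ a ᵥ* M = x := by
  rw [Submodule.mem_span_range_iff_exists_fun] at hx
  obtain ⟨c, hc⟩ := hx
  classical
  refine ⟨fun k => if h : p k then c ⟨k, h⟩ else 0, fun k hk => dif_neg hk, ?_⟩
  rw [← sum_smul_row, ← hc]
  have : ∀ k : Fin m, (if h : p k then c ⟨k, h⟩ else 0) • M k
      = if p k then (if h : p k then c ⟨k, h⟩ else 0) • M k else 0 := by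
    intro k; split <;> simp_all
  have hs : ∀ x : Fin m, x ∈ Finset.univ.filter p ↔ p x := by simp
  rw [Finset.sum_congr rfl fun k _ => this k, ← Finset.sum_filter,
    Finset.sum_subtype _ hs (fun k => (if h : p k then c ⟨k, h⟩ else 0) • M k)]
  refine Finset.sum_congr rfl fun k _ => ?_
  rw [dif_pos k.2]

end QSVDHelper

namespace QSVDHelper

lemma card_le_subtype {m : ℕ} (i : Fin m) : Fintype.card {k : Fin m // k ≤ i} = (i : ℕ) + 1 := by
  rw [Fintype.card_subtype]
  have : Finset.univ.filter (fun k : Fin m => k ≤ i) = Finset.Iic i := by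
    ext k; simp
  rw [this, Fin.card_Iic]

lemma card_ge_subtype {m : ℕ} (i : Fin m) : Fintype.card {k : Fin m // i ≤ k} = m - (i : ℕ) := by
  rw [Fintype.card_subtype]
  have : Finset.univ.filter (fun k : Fin m => i ≤ k) = Finset.Ici i := by
    ext k; simp
  rw [this, Fin.card_Ici]

lemma exists_common {m : ℕ} (i : Fin m) {Mw Mu : Matrix (Fin m) (Fin m) ℍ[ℝ]}
    (hw : LinearIndependent ℍ[ℝ] (fun k => Mw k))
    (hu : LinearIndependent ℍ[ℝ] (fun k => Mu k)) :
    ∃ x : Fin m → ℍ[ℝ], x ≠ 0 ∧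
      x ∈ Submodule.span ℍ[ℝ] (Set.range (fun k : {k // k ≤ i} => Mw k.1)) ∧
      x ∈ Submodule.span ℍ[ℝ] (Set.range (fun k : {k // i ≤ k} => Mu k.1)) := by
  set P := Submodule.span ℍ[ℝ] (Set.range (fun k : {k : Fin m // k ≤ i} => Mw k.1)) with hPdef
  set Q := Submodule.span ℍ[ℝ] (Set.range (fun k : {k : Fin m // i ≤ k} => Mu k.1)) with hQdef
  have hliP : LinearIndependent ℍ[ℝ] (fun k : {k : Fin m // k ≤ i} => Mw k.1) :=
    hw.comp Subtype.val Subtype.val_injective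
  have hliQ : LinearIndependent ℍ[ℝ] (fun k : {k : Fin m // i ≤ k} => Mu k.1) :=
    hu.comp Subtype.val Subtype.val_injective
  have hP : Module.finrank ℍ[ℝ] P = (i : ℕ) + 1 := by
    rw [hPdef, finrank_span_eq_card hliP, card_le_subtype]
  have hQ : Module.finrank ℍ[ℝ] Q = m - (i : ℕ) := by
    rw [hQdef, finrank_span_eq_card hliQ, card_ge_subtype]
  have hne : P ⊓ Q ≠ ⊥ := by
    intro hbot
    have h1 := Submodule.finrank_sup_add_finrank_inf_eq P Q
    rw [hbot, finrank_bot, add_zero, hP, hQ] at h1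
    have h2 : Module.finrank ℍ[ℝ] ↥(P ⊔ Q) ≤ m := by
      have h3 := Submodule.finrank_le (P ⊔ Q)
      rwa [Module.finrank_pi, Fintype.card_fin] at h3
    have him : (i : ℕ) < m := i.isLt
    omega
  obtain ⟨x, hx, hx0⟩ := Submodule.exists_mem_ne_zero_of_ne_bot hne
  exact ⟨x, hx0, hx.1, hx.2⟩

end QSVDHelper

namespace QSVDHelper
open Quaternion

lemma coe_sum' {ι : Type*} (s : Finset ι) (f : ι → ℝ) :
    ((∑ k ∈ s, f k : ℝ) : ℍ[ℝ]) = ∑ k ∈ s, (f k : ℍ[ℝ]) := by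
  classical
  induction s using Finset.induction with
  | empty => simp
  | insert _ _ h ih => rw [Finset.sum_insert h, Finset.sum_insert h, Quaternion.coe_add, ih]

lemma coe_sum {m : ℕ} (f : Fin m → ℝ) : ((∑ k, f k : ℝ) : ℍ[ℝ]) = ∑ k, (f k : ℍ[ℝ]) :=
  coe_sum' _ f

lemma mul_coe_mul_star (q : ℍ[ℝ]) (r : ℝ) :
    q * (r : ℍ[ℝ]) * star q = ((r * normSq q : ℝ) : ℍ[ℝ]) := by
  rw [Quaternion.mul_coe_eq_smul, smul_mul_assoc, Quaternion.self_mul_star, Quaternion.smul_coe]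

lemma dot_diag_star {m : ℕ} (a : Fin m → ℍ[ℝ]) (d : Fin m → ℝ) :
    (a ᵥ* Matrix.diagonal (fun k => (d k : ℍ[ℝ]))) ⬝ᵥ star a
      = ((∑ k, d k * normSq (a k) : ℝ) : ℍ[ℝ]) := by
  rw [coe_sum]
  simp only [dotProduct, Matrix.vecMul_diagonal, Pi.star_apply]
  exact Finset.sum_congr rfl fun k _ => mul_coe_mul_star (a k) (d k)

lemma dot_star_self {m : ℕ} (a : Fin m → ℍ[ℝ]) :
    a ⬝ᵥ star a = ((∑ k, normSq (a k) : ℝ) : ℍ[ℝ]) := by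
  rw [coe_sum]
  simp only [dotProduct, Pi.star_apply]
  exact Finset.sum_congr rfl fun k _ => Quaternion.self_mul_star (a k)

end QSVDHelper

namespace QSVDHelper

lemma star_dot {m : ℕ} (u v : Fin m → ℍ[ℝ]) : star (u ⬝ᵥ star v) = v ⬝ᵥ star u := by
  simp only [dotProduct, star_sum, StarMul.star_mul, star_star, Pi.star_apply]

lemma smul_vecMul_dot {m : ℕ} (r : ℝ) (x y : Fin m → ℍ[ℝ]) (M : Matrix (Fin m) (Fin m) ℍ[ℝ]) :
    (x ᵥ* (r • M)) ⬝ᵥ y = r • ((x ᵥ* M) ⬝ᵥ y) := by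
  simp only [Matrix.vecMul, dotProduct, Matrix.smul_apply, mul_smul_comm,
    ← Finset.smul_sum, smul_mul_assoc]

end QSVDHelper


open QSVDHelper in
/-- For a square quaternion matrix `A` with singular values `σ` (from an SVD)
and `H = (A* + A)/2` with eigenvalues `μ` (from a unitary diagonalization),
one has `μ i ≤ σ i` for all `i`. -/
theorem quaternion_hermitian_part_eigenvalues_le_singular_values (m : ℕ)
    (A U V H W : Matrix (Fin m) (Fin m) ℍ[ℝ]) (σ μ : Fin m → ℝ)
    (hU : Uᴴ * U = 1 ∧ U * Uᴴ = 1) (hV : Vᴴ * V = 1 ∧ V * Vᴴ = 1)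
    (hσdec : ∀ i j : Fin m, i ≤ j → σ j ≤ σ i) (hσnn : ∀ i, 0 ≤ σ i)
    (hSVD : A = U * Matrix.diagonal (fun i => (σ i : ℍ[ℝ])) * Vᴴ)
    (hH : H = (2⁻¹ : ℝ) • (Aᴴ + A))
    (hW : Wᴴ * W = 1 ∧ W * Wᴴ = 1)
    (hμdec : ∀ i j : Fin m, i ≤ j → μ j ≤ μ i)
    (hHdiag : H = W * Matrix.diagonal (fun i => (μ i : ℍ[ℝ])) * Wᴴ) :
    ∀ i, μ i ≤ σ i := by
  intro i
  obtain ⟨hU1, hU2⟩ := hU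
  obtain ⟨hV1, hV2⟩ := hV
  obtain ⟨hW1, hW2⟩ := hW
  set Dσ := Matrix.diagonal (fun k => (σ k : ℍ[ℝ])) with hDσ
  set Dμ := Matrix.diagonal (fun k => (μ k : ℍ[ℝ])) with hDμ
  have liW : LinearIndependent ℍ[ℝ] (fun k => Wᴴ k) := rows_li hW1
  have liU : LinearIndependent ℍ[ℝ] (fun k => Uᴴ k) := rows_li hU1
  obtain ⟨x, hx0, hxP, hxQ⟩ := exists_common i liW liU
  obtain ⟨a, ha0, hax⟩ := exists_coeffs hxP
  obtain ⟨b, hb0, hbx⟩ := exists_coeffs hxQ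
  have hsxa : star x = W *ᵥ star a := by
    rw [← hax, Matrix.star_vecMul, Matrix.conjTranspose_conjTranspose]
  have hsxb : star x = U *ᵥ star b := by
    rw [← hbx, Matrix.star_vecMul, Matrix.conjTranspose_conjTranspose]
  have hSa : x ⬝ᵥ star x = a ⬝ᵥ star a := by
    rw [hsxa]
    nth_rewrite 1 [← hax]
    rw [dotProduct_mulVec, Matrix.vecMul_vecMul, hW1, Matrix.vecMul_one]
  have hSb : x ⬝ᵥ star x = b ⬝ᵥ star b := by
    rw [hsxb]
    nth_rewrite 1 [← hbx]
    rw [dotProduct_mulVec, Matrix.vecMul_vecMul, hU1, Matrix.vecMul_one]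
  have hxH : (x ᵥ* H) ⬝ᵥ star x = (a ᵥ* Dμ) ⬝ᵥ star a := by
    have key : Wᴴ * (W * Dμ * Wᴴ * W) = Dμ := by
      simp only [Matrix.mul_assoc]
      rw [hW1, Matrix.mul_one, ← Matrix.mul_assoc, hW1, Matrix.one_mul]
    rw [hHdiag, hsxa]
    nth_rewrite 1 [← hax]
    rw [dotProduct_mulVec, Matrix.vecMul_vecMul, Matrix.vecMul_vecMul, key]
  have hxA : x ᵥ* A = (b ᵥ* Dσ) ᵥ* Vᴴ := by
    have key : Uᴴ * (U * Dσ * Vᴴ) = Dσ * Vᴴ := by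
      calc Uᴴ * (U * Dσ * Vᴴ) = (Uᴴ * U) * (Dσ * Vᴴ) := by simp only [Matrix.mul_assoc]
        _ = Dσ * Vᴴ := by rw [hU1, Matrix.one_mul]
    rw [hSVD, ← hbx, Matrix.vecMul_vecMul, key, ← Matrix.vecMul_vecMul]
  have hxAnorm : (x ᵥ* A) ⬝ᵥ star (x ᵥ* A) = (b ᵥ* Dσ) ⬝ᵥ star (b ᵥ* Dσ) := by
    rw [hxA, Matrix.star_vecMul, Matrix.conjTranspose_conjTranspose,
      dotProduct_mulVec, Matrix.vecMul_vecMul, hV1, Matrix.vecMul_one]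
  set S : ℝ := ∑ j, normSq (x j) with hSdef
  have hSx : x ⬝ᵥ star x = (S : ℍ[ℝ]) := dot_star_self x
  have hSa' : S = ∑ k, normSq (a k) :=
    Quaternion.coe_injective (by rw [← hSx, hSa, dot_star_self])
  have hSb' : S = ∑ k, normSq (b k) :=
    Quaternion.coe_injective (by rw [← hSx, hSb, dot_star_self])
  set R1 : ℝ := ∑ k, μ k * normSq (a k) with hR1def
  have hxHval : (x ᵥ* H) ⬝ᵥ star x = (R1 : ℍ[ℝ]) := by rw [hxH, hDμ, dot_diag_star]
  set T : ℝ := ∑ j, normSq ((x ᵥ* A) j) with hTdef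
  have hterm : ∀ k, normSq ((b ᵥ* Dσ) k) = σ k ^ 2 * normSq (b k) := by
    intro k
    have hbk : (b ᵥ* Dσ) k = b k * ((σ k : ℝ) : ℍ[ℝ]) := by
      rw [hDσ, Matrix.vecMul_diagonal]
    rw [hbk, show normSq (b k * ((σ k : ℝ) : ℍ[ℝ]))
        = normSq (b k) * normSq ((σ k : ℝ) : ℍ[ℝ]) from map_mul normSq _ _,
      Quaternion.normSq_coe]
    ring
  have hTval : T = ∑ k, σ k ^ 2 * normSq (b k) := by
    apply Quaternion.coe_injective
    rw [hTdef, ← dot_star_self, hxAnorm, dot_star_self]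
    exact congrArg (fun r : ℝ => (r : ℍ[ℝ])) (Finset.sum_congr rfl fun k _ => hterm k)
  set z : ℍ[ℝ] := (x ᵥ* A) ⬝ᵥ star x with hzdef
  have hstarz : star z = (x ᵥ* Aᴴ) ⬝ᵥ star x := by
    rw [hzdef, star_dot, Matrix.star_vecMul, dotProduct_mulVec]
  have hAAH : A + Aᴴ = (2 : ℝ) • H := by
    rw [hH, smul_smul]
    norm_num
    rw [add_comm]
  have hzre : z.re = R1 := by
    have h1 : z + star z = ((2 * R1 : ℝ) : ℍ[ℝ]) := by
      rw [hstarz, hzdef, ← add_dotProduct, ← Matrix.vecMul_add, hAAH,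
        smul_vecMul_dot, hxHval, ← Quaternion.coe_mul_eq_smul, ← Quaternion.coe_mul]
    have h2 : z + star z = ((2 * z.re : ℝ) : ℍ[ℝ]) := Quaternion.self_add_star' z
    have h3 := Quaternion.coe_injective (h2.symm.trans h1)
    linarith
  -- positivity of S
  have hSnn : ∀ q : ℍ[ℝ], 0 ≤ normSq q := fun q => Quaternion.normSq_nonneg
  have hSpos : 0 < S := by
    rw [hSdef]
    obtain ⟨j, hj⟩ := Function.ne_iff.mp hx0
    refine Finset.sum_pos' (fun k _ => hSnn _) ⟨j, Finset.mem_univ j, ?_⟩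
    exact lt_of_le_of_ne (hSnn _) (fun h => hj (Quaternion.normSq_eq_zero.mp h.symm))
  -- lower bound : μ i * S ≤ R1
  have hlow : μ i * S ≤ R1 := by
    rw [hSa', Finset.mul_sum, hR1def]
    refine Finset.sum_le_sum fun k _ => ?_
    by_cases hk : k ≤ i
    · exact mul_le_mul_of_nonneg_right (hμdec k i hk) (hSnn _)
    · rw [ha0 k hk]
      simp
  -- upper bound : T ≤ σ i ^ 2 * S
  have hup : T ≤ σ i ^ 2 * S := by
    rw [hTval, hSb', Finset.mul_sum]
    refine Finset.sum_le_sum fun k _ => ?_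
    by_cases hk : i ≤ k
    · refine mul_le_mul_of_nonneg_right ?_ (hSnn _)
      exact pow_le_pow_left₀ (hσnn k) (hσdec i k hk) 2
    · rw [hb0 k hk]
      simp
  -- Cauchy–Schwarz : z.re ^ 2 ≤ T * S
  have hcs : z.re ^ 2 ≤ T * S := by
    have h1 : z.re ^ 2 ≤ normSq z := by
      rw [Quaternion.normSq_def']
      nlinarith [sq_nonneg z.imI, sq_nonneg z.imJ, sq_nonneg z.imK]
    have h2 : ‖z‖ ≤ ∑ j, ‖(x ᵥ* A) j‖ * ‖x j‖ := by
      calc ‖z‖ ≤ ∑ j, ‖(x ᵥ* A) j * star (x j)‖ := by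
            rw [hzdef]
            exact norm_sum_le _ _
        _ = ∑ j, ‖(x ᵥ* A) j‖ * ‖x j‖ := by
            refine Finset.sum_congr rfl fun j _ => ?_
            rw [norm_mul, Quaternion.norm_star]
    have h3 : (∑ j, ‖(x ᵥ* A) j‖ * ‖x j‖) ^ 2
        ≤ (∑ j, ‖(x ᵥ* A) j‖ ^ 2) * ∑ j, ‖x j‖ ^ 2 :=
      Finset.sum_mul_sq_le_sq_mul_sq Finset.univ _ _
    have hT2 : (∑ j, ‖(x ᵥ* A) j‖ ^ 2) = T := by
      rw [hTdef]
      exact Finset.sum_congr rfl fun j _ => by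
        rw [Quaternion.normSq_eq_norm_mul_self, sq]
    have hS2 : (∑ j, ‖x j‖ ^ 2) = S := by
      rw [hSdef]
      exact Finset.sum_congr rfl fun j _ => by
        rw [Quaternion.normSq_eq_norm_mul_self, sq]
    have h4 : normSq z = ‖z‖ ^ 2 := by rw [Quaternion.normSq_eq_norm_mul_self, sq]
    have h5 : ‖z‖ ^ 2 ≤ (∑ j, ‖(x ᵥ* A) j‖ * ‖x j‖) ^ 2 := by
      refine pow_le_pow_left₀ (norm_nonneg z) h2 2
    calc z.re ^ 2 ≤ normSq z := h1
      _ = ‖z‖ ^ 2 := h4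
      _ ≤ (∑ j, ‖(x ᵥ* A) j‖ * ‖x j‖) ^ 2 := h5
      _ ≤ (∑ j, ‖(x ᵥ* A) j‖ ^ 2) * ∑ j, ‖x j‖ ^ 2 := h3
      _ = T * S := by rw [hT2, hS2]
  -- conclusion
  by_contra hcon
  push_neg at hcon
  have hμpos : 0 < μ i := lt_of_le_of_lt (hσnn i) hcon
  have h4 : σ i * S < z.re := by
    have := mul_lt_mul_of_pos_right hcon hSpos
    linarith [hzre ▸ hlow]
  have h5 : (σ i * S) ^ 2 < z.re ^ 2 := by
    refine pow_lt_pow_left₀ h4 (mul_nonneg (hσnn i) hSpos.le) (by norm_num)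
  have h6 : T * S ≤ (σ i * S) ^ 2 := by
    calc T * S ≤ (σ i ^ 2 * S) * S := mul_le_mul_of_nonneg_right hup hSpos.le
      _ = (σ i * S) ^ 2 := by ring
  linarith
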